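/- Let α be a nonnegative random variable with finite expectation whose cumulative distribution function F is continuous (i.e. the induced measure is non-atomic), and let k ∈ ℝ. Then the function r ↦ E[(α − k − r)⁺] is differentiable at every r, with derivative d/dr E[(α − k − r)⁺] = −(1 − F(k + r)). -/

import Mathlib

open MeasureTheory Set

/-- The cumulative distribution function of a distribution `μ` on `ℝ`. -/
noncomputable def cdfR (μ : Measure ℝ) (t : ℝ) : ℝ := (μ (Iic t)).toReal

/-- For a nonnegative random variable `α` (with distribution `μ`) having
finite expectation and non-atomic (continuous) CDF `F`, and any `k ∈ ℝ`, the function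
`r ↦ E[(α − k − r)⁺]` is differentiable everywhere with derivative `−(1 − F(k + r))`. -/
theorem stmt6 (μ : Measure ℝ) [IsProbabilityMeasure μ]
    (hnonneg : μ (Iio 0) = 0) (hint : Integrable id μ)
    (hcont : ∀ t : ℝ, μ {t} = 0) (k : ℝ) :
    ∀ r : ℝ, HasDerivAt (fun r' : ℝ => ∫ x, max (x - k - r') 0 ∂μ)
      (-(1 - cdfR μ (k + r))) r := by
  intro r
  set t := k + r with ht
  set F' : ℝ → ℝ := (Ioi t).indicator (fun _ => (-1 : ℝ)) with hF'
  have hmax_lip : ∀ x : ℝ, LipschitzWith 1 (fun r' : ℝ => max (x - k - r') 0) := by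
    intro x
    refine LipschitzWith.of_dist_le_mul fun a b => ?_
    simp only [Real.dist_eq]
    calc |max (x - k - a) 0 - max (x - k - b) 0| ≤ |(x - k - a) - (x - k - b)| :=
          abs_max_sub_max_le_abs _ _ _
      _ = |a - b| := by rw [show (x - k - a) - (x - k - b) = b - a by ring, abs_sub_comm]
      _ ≤ ↑(1 : NNReal) * |a - b| := by norm_num
  have key := hasDerivAt_integral_of_dominated_loc_of_lip (μ := μ)
      (F := fun r' x => max (x - k - r') 0) (F' := F') (x₀ := r)
      (bound := fun _ => (1 : ℝ)) (s := Metric.ball r 1) (Metric.ball_mem_nhds r one_pos)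
      (Filter.Eventually.of_forall fun r' =>
        (Continuous.max (by continuity) continuous_const).aestronglyMeasurable)
      ?_ ?_ ?_ (integrable_const 1) ?_
  · obtain ⟨-, hd⟩ := key
    have hI : ∫ x, F' x ∂μ = -(1 - cdfR μ t) := by
      rw [hF', integral_indicator_const _ measurableSet_Ioi]
      have hc : μ (Ioi t) = 1 - μ (Iic t) := by
        rw [← prob_compl_eq_one_sub measurableSet_Iic, compl_Iic]
      have hle : μ (Iic t) ≤ 1 := prob_le_one
      rw [measureReal_def, hc, cdfR, ENNReal.toReal_sub_of_le hle ENNReal.one_ne_top]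
      simp
    rwa [hI] at hd
  · -- integrability of F r
    refine (hint.abs.add (integrable_const (|k| + |r|))).mono
      ((Continuous.max (by continuity) continuous_const).aestronglyMeasurable)
      (Filter.Eventually.of_forall fun x => ?_)
    simp only [Real.norm_eq_abs, id, Pi.add_apply]
    have h1 : max (x - k - r) 0 ≤ |x| + (|k| + |r|) := by
      refine max_le ?_ (by positivity)
      nlinarith [le_abs_self x, neg_abs_le k, neg_abs_le r]
    have h2 : (0:ℝ) ≤ max (x - k - r) 0 := le_max_right _ _
    rw [abs_of_nonneg h2, abs_of_nonneg (by positivity : (0:ℝ) ≤ |x| + (|k| + |r|))]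
    exact h1
  · -- measurability of F'
    exact (measurable_const.indicator measurableSet_Ioi).aestronglyMeasurable
  · -- Lipschitz
    refine Filter.Eventually.of_forall fun x => ?_
    have h1 : Real.nnabs ((fun _ : ℝ => (1:ℝ)) x) = 1 := by simp
    rw [h1]
    exact (hmax_lip x).lipschitzOnWith
  · -- a.e. derivative
    have hnull : μ {x : ℝ | ¬ x ≠ t} = 0 := by
      refine measure_mono_null (fun x hx => ?_) (hcont t)
      simpa using hx
    filter_upwards [(ae_iff).2 hnull] with x hx
    rcases lt_or_gt_of_ne hx with hlt | hgt
    · -- x < t : locally 0, derivative 0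
      have hF'x : F' x = 0 := by
        rw [hF', indicator_of_notMem (by simpa using not_lt.2 hlt.le)]
      rw [hF'x]
      have heq : (fun r' : ℝ => max (x - k - r') 0) =ᶠ[nhds r] fun _ => (0:ℝ) := by
        have : ∀ᶠ r' in nhds r, x - k - r' < 0 := by
          have hc : Continuous fun r' : ℝ => x - k - r' := by continuity
          have : x - k - r < 0 := by rw [ht] at hlt; linarith
          exact (hc.tendsto r).eventually (eventually_lt_nhds this)
        filter_upwards [this] with r' hr'
        exact max_eq_right hr'.le
      exact (hasDerivAt_const r (0:ℝ)).congr_of_eventuallyEq heq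
    · -- x > t : locally x - k - r', derivative -1
      have hF'x : F' x = -1 := by
        rw [hF', indicator_of_mem (by simpa using hgt)]
      rw [hF'x]
      have heq : (fun r' : ℝ => max (x - k - r') 0) =ᶠ[nhds r] fun r' => x - k - r' := by
        have : ∀ᶠ r' in nhds r, 0 < x - k - r' := by
          have hc : Continuous fun r' : ℝ => x - k - r' := by continuity
          have : 0 < x - k - r := by rw [ht] at hgt; linarith
          exact (hc.tendsto r).eventually (eventually_gt_nhds this)
        filter_upwards [this] with r' hr'
        exact max_eq_left hr'.le
      have hd : HasDerivAt (fun r' : ℝ => x - k - r') (-1) r := by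
        simpa using ((hasDerivAt_id r).const_sub (x - k))
      exact hd.congr_of_eventuallyEq heq
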